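/- Let S and S' be disjoint finite sets with |S| ≥ 3 and |S'| = ⌈log₂(|S|+1)⌉. Then there exists a prime graph G on vertex set S ∪ S' such that S and S' are stable sets in G, the map s ↦ N_G(s) is an injection from S into the nonempty subsets of S', and there is an injection φ : S' → S with N_G(φ(s')) = S' \ {s'} for each s' ∈ S'. -/

import Mathlib

lemma exists_inj_extend {A β : Type*} [Fintype A] [DecidableEq β]
    (U T : Finset β) (hTU : T ⊆ U) (h1 : T.card ≤ Fintype.card A)
    (h2 : Fintype.card A ≤ U.card) :
    ∃ f : A → β, Function.Injective f ∧ (∀ a, f a ∈ U) ∧ ∀ x ∈ T, ∃ a, f a = x := by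
  classical
  set B := {x : β // x ∈ U} with hB
  have hcardB : Fintype.card B = U.card := Fintype.card_coe U
  set p : B → Prop := fun x => (x : β) ∈ T with hp
  have eT : {x : B // p x} ≃ {x : β // x ∈ T} :=
    { toFun := fun x => ⟨x.1.1, x.2⟩
      invFun := fun x => ⟨⟨x.1, hTU x.2⟩, x.2⟩
      left_inv := fun x => rfl
      right_inv := fun x => rfl }
  have hcardT : Fintype.card {x : B // p x} = T.card := by
    rw [Fintype.card_congr eT, Fintype.card_coe]
  set t := T.card with ht
  set b := U.card with hb
  have htb : t ≤ b := Finset.card_le_card hTU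
  have e1 : {x : B // p x} ≃ Fin t := (Fintype.equivFinOfCardEq hcardT)
  have hcardTc : Fintype.card {x : B // ¬ p x} = b - t := by
    rw [Fintype.card_subtype_compl, hcardT, hcardB]
  have e2 : {x : B // ¬ p x} ≃ Fin (b - t) := Fintype.equivFinOfCardEq hcardTc
  have hsum : t + (b - t) = b := Nat.add_sub_cancel' htb
  set eB : B ≃ Fin b :=
    (Equiv.sumCompl p).symm.trans ((e1.sumCongr e2).trans (finSumFinEquiv.trans (finCongr hsum)))
    with heB
  have heBT : ∀ x : B, p x → (eB x : ℕ) < t := by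
    intro x hx
    have : (Equiv.sumCompl p).symm x = Sum.inl ⟨x, hx⟩ := by
      exact Equiv.sumCompl_symm_apply_of_pos hx
    simp only [heB, Equiv.trans_apply, this, Equiv.sumCongr_apply, Sum.map_inl,
      finSumFinEquiv_apply_left, finCongr_apply]
    simp [Fin.castAdd]
  have eA : A ≃ Fin (Fintype.card A) := Fintype.equivFin A
  refine ⟨fun a => (eB.symm (Fin.castLE h2 (eA a)) : B), ?_, ?_, ?_⟩
  · intro a a' h
    have := Subtype.ext h
    have h2' := eB.symm.injective this
    have : eA a = eA a' := Fin.castLE_injective h2 h2'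
    exact eA.injective this
  · intro a; exact (eB.symm _).2
  · intro x hx
    set xb : B := ⟨x, hTU hx⟩ with hxb
    have hplt : (eB xb : ℕ) < Fintype.card A := lt_of_lt_of_le (heBT xb hx) h1
    refine ⟨eA.symm ⟨(eB xb : ℕ), hplt⟩, ?_⟩
    have h5 : Fin.castLE h2 (eA (eA.symm ⟨(eB xb : ℕ), hplt⟩)) = eB xb := by
      simp [Fin.ext_iff]
    dsimp only
    rw [h5, Equiv.symm_apply_apply]

/-- `M` is a module of `G`: every vertex outside `M` is adjacent to all of `M` or to none. -/
def IsModule {V : Type*} (G : SimpleGraph V) (M : Set V) : Prop :=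
  ∀ v ∉ M, (∀ m ∈ M, G.Adj v m) ∨ (∀ m ∈ M, ¬ G.Adj v m)

/-- `G` is prime: at least 4 vertices and only trivial modules. -/
def IsPrimeGraph {V : Type*} (G : SimpleGraph V) : Prop :=
  4 ≤ Nat.card V ∧ ∀ M : Set V, IsModule G M → M = Set.univ ∨ M.Subsingleton

lemma pow_aux : ∀ n, 3 ≤ n → n + 1 ≤ 2 ^ (n - 1) := by
  intro n hn
  induction n, hn using Nat.le_induction with
  | base => norm_num
  | succ m hm ih =>
    have h1 : m + 1 - 1 = m - 1 + 1 := by omega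
    rw [h1, pow_succ]
    omega

theorem exists_prime_bipartite_extension {α : Type*} (S S' : Set α)
    (hSfin : S.Finite) (hS'fin : S'.Finite) (hd : Disjoint S S')
    (h3 : 3 ≤ S.ncard) (hcard : S'.ncard = Nat.clog 2 (S.ncard + 1)) :
    ∃ G : SimpleGraph ↥(S ∪ S'),
      IsPrimeGraph G ∧
      (∀ a b : ↥(S ∪ S'), (a : α) ∈ S → (b : α) ∈ S → ¬ G.Adj a b) ∧
      (∀ a b : ↥(S ∪ S'), (a : α) ∈ S' → (b : α) ∈ S' → ¬ G.Adj a b) ∧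
      (∀ x : ↥(S ∪ S'), (x : α) ∈ S → (G.neighborSet x).Nonempty) ∧
      Set.InjOn G.neighborSet {x : ↥(S ∪ S') | (x : α) ∈ S} ∧
      ∃ φ : ↥(S ∪ S') → ↥(S ∪ S'),
        Set.InjOn φ {x : ↥(S ∪ S') | (x : α) ∈ S'} ∧
        ∀ x : ↥(S ∪ S'), (x : α) ∈ S' →
          (φ x : α) ∈ S ∧
          G.neighborSet (φ x) = {y : ↥(S ∪ S') | (y : α) ∈ S'} \ {x} := by
  classical
  haveI : Fintype ↥S := hSfin.fintype
  haveI : Fintype ↥S' := hS'fin.fintype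
  set n := S.ncard with hn
  set k := S'.ncard with hk
  have hnb : ∀ x, x ∈ S → x ∈ S' → False := fun x h h' =>
    Set.disjoint_left.mp hd h h'
  -- arithmetic
  have hk2 : 2 ≤ k := by
    have : Nat.clog 2 4 ≤ Nat.clog 2 (n + 1) := Nat.clog_mono_right 2 (by omega)
    have h4 : Nat.clog 2 4 = 2 := by
      rw [show (4 : ℕ) = 2 ^ 2 by norm_num, Nat.clog_pow 2 2 one_lt_two]
    omega
  have hn2k : n + 1 ≤ 2 ^ k := by
    rw [hcard]; exact Nat.le_pow_clog one_lt_two _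
  have hkn : k + 1 ≤ n := by
    have h1 : n + 1 ≤ 2 ^ (n - 1) := pow_aux n h3
    have h2 : Nat.clog 2 (n + 1) ≤ Nat.clog 2 (2 ^ (n - 1)) := Nat.clog_mono_right 2 h1
    rw [Nat.clog_pow 2 _ one_lt_two] at h2
    omega
  -- finsets
  set FS : Finset α := hSfin.toFinset with hFS
  set FS' : Finset α := hS'fin.toFinset with hFS'
  have hFScard : FS.card = n := by rw [hFS, hn, Set.ncard_eq_toFinset_card _ hSfin]
  have hFS'card : FS'.card = k := by rw [hFS', hk, Set.ncard_eq_toFinset_card _ hS'fin]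
  have hmemFS' : ∀ x, x ∈ FS' ↔ x ∈ S' := fun x => Set.Finite.mem_toFinset _
  set U : Finset (Finset α) := FS'.powerset.erase ∅ with hU
  set T : Finset (Finset α) := insert FS' (FS'.image fun y => FS'.erase y) with hT
  have hUcard : U.card = 2 ^ k - 1 := by
    rw [hU, Finset.card_erase_of_mem (Finset.empty_mem_powerset _),
      Finset.card_powerset, hFS'card]
  have hFS'ne : FS'.Nonempty := by
    rw [← Finset.card_pos, hFS'card]; omega
  have hTU : T ⊆ U := by
    intro t ht
    rw [hT] at ht
    rcases Finset.mem_insert.mp ht with h | h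
    · subst h
      exact Finset.mem_erase.mpr ⟨hFS'ne.ne_empty, Finset.mem_powerset_self _⟩
    · obtain ⟨y, hy, rfl⟩ := Finset.mem_image.mp h
      refine Finset.mem_erase.mpr ⟨?_, Finset.mem_powerset.mpr (Finset.erase_subset _ _)⟩
      have : (FS'.erase y).card = k - 1 := by
        rw [Finset.card_erase_of_mem hy, hFS'card]
      intro h0
      rw [h0] at this
      simp at this
      omega
  have hTcard : T.card = k + 1 := by
    have himg : (FS'.image fun y => FS'.erase y).card = k := by
      rw [Finset.card_image_of_injOn (Finset.erase_injOn FS'), hFS'card]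
    have hnm : FS' ∉ FS'.image fun y => FS'.erase y := by
      intro h
      obtain ⟨y, hy, he⟩ := Finset.mem_image.mp h
      have := Finset.card_erase_of_mem hy
      rw [he] at this
      omega
    rw [hT, Finset.card_insert_of_notMem hnm, himg]
  have hScard : Fintype.card ↥S = n := by
    rw [← Nat.card_eq_fintype_card, Nat.card_coe_set_eq]
  obtain ⟨f, hfinj, hfU, hfT⟩ := exists_inj_extend U T hTU
    (by rw [hTcard, hScard]; omega) (by rw [hUcard, hScard]; omega)
  set N : α → Finset α := fun x => if h : x ∈ S then f ⟨x, h⟩ else ∅ with hN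
  have hNdef : ∀ x (h : x ∈ S), N x = f ⟨x, h⟩ := fun x h => dif_pos h
  have hNU : ∀ x ∈ S, N x ∈ U := fun x h => by rw [hNdef x h]; exact hfU _
  have hNsub : ∀ x, ∀ y ∈ N x, y ∈ S' := by
    intro x y hy
    by_cases h : x ∈ S
    · have hu := hNU x h
      rw [hU, Finset.mem_erase, Finset.mem_powerset] at hu
      exact (hmemFS' y).mp (hu.2 hy)
    · rw [hN] at hy; simp [h] at hy
  have hNne : ∀ x ∈ S, (N x).Nonempty := by
    intro x h
    have hu := hNU x h
    rw [hU, Finset.mem_erase] at hu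
    exact Finset.nonempty_of_ne_empty hu.1
  have hNinj : ∀ x ∈ S, ∀ y ∈ S, N x = N y → x = y := by
    intro x hx y hy h
    rw [hNdef x hx, hNdef y hy] at h
    exact Subtype.mk_eq_mk.mp (hfinj h)
  have hfull : ∃ w ∈ S, N w = FS' := by
    obtain ⟨a, ha⟩ := hfT FS' (Finset.mem_insert_self _ _)
    exact ⟨a, a.2, by rw [hNdef _ a.2]; simpa using ha⟩
  have hco : ∀ y ∈ S', ∃ s ∈ S, N s = FS'.erase y := by
    intro y hy
    obtain ⟨a, ha⟩ := hfT (FS'.erase y)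
      (Finset.mem_insert_of_mem (Finset.mem_image_of_mem _ ((hmemFS' y).mpr hy)))
    exact ⟨a, a.2, by rw [hNdef _ a.2]; simpa using ha⟩
  -- the graph
  set G : SimpleGraph ↥(S ∪ S') :=
    { Adj := fun a b => ((a : α) ∈ S ∧ (b : α) ∈ N a) ∨ ((b : α) ∈ S ∧ (a : α) ∈ N b)
      symm := ⟨fun a b h => h.symm⟩
      loopless := ⟨fun a h => by
        rcases h with ⟨h1, h2⟩ | ⟨h1, h2⟩ <;> exact hnb _ h1 (hNsub _ _ h2)⟩ } with hG
  have hAdj : ∀ a b : ↥(S ∪ S'), G.Adj a b ↔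
      (((a : α) ∈ S ∧ (b : α) ∈ N a) ∨ ((b : α) ∈ S ∧ (a : α) ∈ N b)) := fun a b => Iff.rfl
  have hAdjS : ∀ a b : ↥(S ∪ S'), (a : α) ∈ S → (G.Adj a b ↔ (b : α) ∈ N ↑a) := by
    intro a b ha
    rw [hAdj]
    constructor
    · rintro (⟨h1, h2⟩ | ⟨h1, h2⟩)
      · exact h2
      · exact absurd (hNsub _ _ h2) (fun h => hnb _ ha h)
    · intro h; exact Or.inl ⟨ha, h⟩
  have hSS : ∀ a b : ↥(S ∪ S'), (a : α) ∈ S → (b : α) ∈ S → ¬ G.Adj a b := by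
    intro a b ha hb h
    rw [hAdjS a b ha] at h
    exact hnb _ hb (hNsub _ _ h)
  have hS'S' : ∀ a b : ↥(S ∪ S'), (a : α) ∈ S' → (b : α) ∈ S' → ¬ G.Adj a b := by
    intro a b ha hb h
    rcases (hAdj a b).mp h with ⟨h1, _⟩ | ⟨h1, _⟩
    · exact hnb _ h1 ha
    · exact hnb _ h1 hb
  -- neighbor sets of S-vertices
  have hnbhd : ∀ x : ↥(S ∪ S'), (x : α) ∈ S →
      G.neighborSet x = {b : ↥(S ∪ S') | (b : α) ∈ N ↑x} := by
    intro x hx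
    ext b
    exact hAdjS x b hx
  have hne : ∀ x : ↥(S ∪ S'), (x : α) ∈ S → (G.neighborSet x).Nonempty := by
    intro x hx
    obtain ⟨y, hy⟩ := hNne _ hx
    exact ⟨⟨y, Or.inr (hNsub _ _ hy)⟩, (hAdjS x _ hx).mpr hy⟩
  have hinjnbhd : Set.InjOn G.neighborSet {x : ↥(S ∪ S') | (x : α) ∈ S} := by
    intro a ha b hb h
    have hNab : N ↑a = N ↑b := by
      ext y
      constructor <;> intro hy
      · have hyV : (⟨y, Or.inr (hNsub _ _ hy)⟩ : ↥(S ∪ S')) ∈ G.neighborSet a :=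
          (hAdjS a _ ha).mpr hy
        rw [h] at hyV
        exact (hAdjS b _ hb).mp hyV
      · have hyV : (⟨y, Or.inr (hNsub _ _ hy)⟩ : ↥(S ∪ S')) ∈ G.neighborSet b :=
          (hAdjS b _ hb).mpr hy
        rw [← h] at hyV
        exact (hAdjS a _ ha).mp hyV
    exact Subtype.ext (hNinj _ ha _ hb hNab)
  -- φ
  set φ : ↥(S ∪ S') → ↥(S ∪ S') := fun x =>
    if h : (x : α) ∈ S' then ⟨(hco ↑x h).choose, Or.inl (hco ↑x h).choose_spec.1⟩ else x
    with hφdef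
  have hφ : ∀ x : ↥(S ∪ S'), (h : (x : α) ∈ S') →
      (φ x : α) ∈ S ∧ N ↑(φ x) = FS'.erase ↑x := by
    intro x h
    rw [hφdef]
    simp only [dif_pos h]
    exact ⟨(hco ↑x h).choose_spec.1, (hco ↑x h).choose_spec.2⟩
  have hφnbhd : ∀ x : ↥(S ∪ S'), (x : α) ∈ S' →
      G.neighborSet (φ x) = {y : ↥(S ∪ S') | (y : α) ∈ S'} \ {x} := by
    intro x hx
    obtain ⟨h1, h2⟩ := hφ x hx
    rw [hnbhd _ h1, h2]
    ext y
    simp only [Set.mem_setOf_eq, Finset.mem_erase, Set.mem_diff, Set.mem_singleton_iff]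
    rw [hmemFS']
    constructor
    · rintro ⟨hne, hy⟩
      exact ⟨hy, fun h => hne (by rw [h])⟩
    · rintro ⟨hy, hne⟩
      exact ⟨fun h => hne (Subtype.ext h), hy⟩
  have hφinj : Set.InjOn φ {x : ↥(S ∪ S') | (x : α) ∈ S'} := by
    intro a ha b hb h
    have h1 := hφnbhd a ha
    have h2 := hφnbhd b hb
    rw [h] at h1
    rw [h1] at h2
    by_contra hab
    have haS' : a ∈ {y : ↥(S ∪ S') | (y : α) ∈ S'} \ {b} := ⟨ha, fun h => hab h⟩
    rw [← h2] at haS'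
    exact haS'.2 rfl
  refine ⟨G, ⟨?_, ?_⟩, hSS, hS'S', hne, hinjnbhd, φ, hφinj,
    fun x hx => ⟨(hφ x hx).1, hφnbhd x hx⟩⟩
  · -- 4 ≤ card
    have hcV : Nat.card ↥(S ∪ S') = (S ∪ S').ncard := Nat.card_coe_set_eq _
    rw [hcV, Set.ncard_union_eq hd hSfin hS'fin]
    omega
  · -- modules
    intro M hM
    by_cases hMs : M.Subsingleton
    · exact Or.inr hMs
    left
    rw [Set.not_subsingleton_iff] at hMs
    obtain ⟨u, hu, v, hv, huv⟩ := hMs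
    -- any vertex outside M is adjacent to all or none of M
    -- helper: from two distinct S-vertices in M, get an S'-vertex in M
    have distS : ∀ u v : ↥(S ∪ S'), u ∈ M → v ∈ M → u ≠ v → (u : α) ∈ S →
        (v : α) ∈ S → ∃ x ∈ M, (x : α) ∈ S' := by
      intro u v hu hv huv huS hvS
      have hNuv : N ↑u ≠ N ↑v := fun h => huv (Subtype.ext (hNinj _ huS _ hvS h))
      have hc : ∃ c, ¬ (c ∈ N ↑u ↔ c ∈ N ↑v) := by
        by_contra h
        push_neg at h
        exact hNuv (Finset.ext fun c => h c)
      obtain ⟨c, hc⟩ := hc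
      have hcS' : c ∈ S' := by
        by_cases h1 : c ∈ N ↑u
        · exact hNsub _ _ h1
        · rcases not_iff.mp hc with h
          exact hNsub _ _ (h.mp h1)
      set cv : ↥(S ∪ S') := ⟨c, Or.inr hcS'⟩ with hcv
      refine ⟨cv, ?_, hcS'⟩
      by_contra hcM
      have hiff : G.Adj cv u ↔ G.Adj cv v := by
        rcases hM cv hcM with hall | hnone
        · exact ⟨fun _ => hall v hv, fun _ => hall u hu⟩
        · exact ⟨fun h => absurd h (hnone u hu), fun h => absurd h (hnone v hv)⟩
      rw [G.adj_comm cv u, G.adj_comm cv v, hAdjS u cv huS, hAdjS v cv hvS] at hiff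
      exact hc hiff
    -- helper: from two distinct S'-vertices in M, get an S-vertex in M
    have distS' : ∀ u v : ↥(S ∪ S'), u ∈ M → v ∈ M → u ≠ v → (u : α) ∈ S' →
        (v : α) ∈ S' → ∃ s ∈ M, (s : α) ∈ S := by
      intro u v hu hv huv huS' hvS'
      obtain ⟨hwS, hwN⟩ := hφ u huS'
      have hadjv : G.Adj (φ u) v := by
        rw [hAdjS _ _ hwS, hwN]
        exact Finset.mem_erase.mpr ⟨fun h => huv (Subtype.ext h.symm), (hmemFS' _).mpr hvS'⟩
      have hnadju : ¬ G.Adj (φ u) u := by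
        rw [hAdjS _ _ hwS, hwN]
        simp
      refine ⟨φ u, ?_, hwS⟩
      by_contra hwM
      rcases hM (φ u) hwM with hall | hnone
      · exact hnadju (hall u hu)
      · exact hnone v hv hadjv
    have stepA : (∃ s ∈ M, (s : α) ∈ S) ∧ (∃ x ∈ M, (x : α) ∈ S') := by
      rcases u.2 with huS | huS' <;> rcases v.2 with hvS | hvS'
      · exact ⟨⟨u, hu, huS⟩, distS u v hu hv huv huS hvS⟩
      · exact ⟨⟨u, hu, huS⟩, ⟨v, hv, hvS'⟩⟩
      · exact ⟨⟨v, hv, hvS⟩, ⟨u, hu, huS'⟩⟩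
      · exact ⟨distS' u v hu hv huv huS' hvS', ⟨u, hu, huS'⟩⟩
    obtain ⟨⟨s, hsM, hsS⟩, ⟨x, hxM, hxS'⟩⟩ := stepA
    obtain ⟨w0, hw0S, hw0N⟩ := hfull
    set wv : ↥(S ∪ S') := ⟨w0, Or.inl hw0S⟩ with hwv
    -- all S'-vertices are in M
    have hSB : ∀ y : ↥(S ∪ S'), (y : α) ∈ S' → y ∈ M := by
      intro y hyS'
      by_contra hyM
      have hynone : ∀ m ∈ M, ¬ G.Adj y m := by
        rcases hM y hyM with hall | hnone
        · exact absurd (hall x hxM) (hS'S' y x hyS' hxS')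
        · exact hnone
      have hφy := hφ y hyS'
      -- φ y ∈ M
      have hxy : (x : α) ≠ (y : α) := fun h => hyM ((Subtype.ext h) ▸ hxM)
      have hadjφx : G.Adj (φ y) x := by
        rw [hAdjS _ _ hφy.1, hφy.2]
        exact Finset.mem_erase.mpr ⟨hxy, (hmemFS' _).mpr hxS'⟩
      have hφyM : φ y ∈ M := by
        by_contra h
        rcases hM (φ y) h with hall | hnone
        · exact hSS (φ y) s hφy.1 hsS (hall s hsM)
        · exact hnone x hxM hadjφx
      -- every S'-vertex other than y is in M
      have hz : ∀ z : ↥(S ∪ S'), (z : α) ∈ S' → z ≠ y → z ∈ M := by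
        intro z hzS' hzy
        by_contra hzM
        rcases hM z hzM with hall | hnone
        · exact hS'S' z x hzS' hxS' (hall x hxM)
        · apply hnone (φ y) hφyM
          rw [G.adj_comm, hAdjS _ _ hφy.1, hφy.2]
          exact Finset.mem_erase.mpr ⟨fun h => hzy (Subtype.ext h), (hmemFS' _).mpr hzS'⟩
      -- the full vertex is in M
      have hwvM : wv ∈ M := by
        by_contra h
        have hswv : s ≠ wv := fun he => h (he ▸ hsM)
        obtain ⟨c, hc⟩ : (FS'.erase ↑y).Nonempty := by
          rw [← Finset.card_pos, Finset.card_erase_of_mem ((hmemFS' _).mpr hyS'), hFS'card]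
          omega
        have hcS' : c ∈ S' := (hmemFS' _).mp (Finset.mem_of_mem_erase hc)
        set cv : ↥(S ∪ S') := ⟨c, Or.inr hcS'⟩ with hcv
        have hcvM : cv ∈ M := hz cv hcS' (fun he => (Finset.mem_erase.mp hc).1 (congrArg Subtype.val he))
        have hadjwc : G.Adj wv cv := by
          rw [hAdjS _ _ hw0S]
          show c ∈ N w0
          rw [hw0N]
          exact (hmemFS' _).mpr hcS'
        rcases hM wv h with hall | hnone
        · exact hSS wv s hw0S hsS (hall s hsM)
        · exact hnone cv hcvM hadjwc
      apply hynone wv hwvM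
      rw [G.adj_comm, hAdjS _ _ hw0S]
      show (y : α) ∈ N w0
      rw [hw0N]
      exact (hmemFS' _).mpr hyS'
    -- all S-vertices are in M
    have hSC : ∀ t : ↥(S ∪ S'), (t : α) ∈ S → t ∈ M := by
      intro t htS
      by_contra htM
      rcases hM t htM with hall | hnone
      · exact hSS t s htS hsS (hall s hsM)
      · obtain ⟨c, hc⟩ := hNne _ htS
        have hcS' : c ∈ S' := hNsub _ _ hc
        exact hnone ⟨c, Or.inr hcS'⟩ (hSB _ hcS') ((hAdjS t _ htS).mpr hc)
    ext z
    simp only [Set.mem_univ, iff_true]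
    rcases z.2 with hz | hz
    · exact hSC z hz
    · exact hSB z hz
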